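/- Let E₁,…,E_r ⊆ 𝒫 and E₁',…,E_s' ⊆ 𝒫 be uniform properties, each containing the empty partition 0, such that the sets O(E₁),…,O(E_r) are pairwise distinct with no O(E_i) contained in another O(E_j) (i ≠ j), and similarly for O(E₁'),…,O(E_s'). If O(E₁) ∪ … ∪ O(E_r) = O(E₁') ∪ … ∪ O(E_s'), then r = s and the families of sets {O(E₁),…,O(E_r)} and {O(E₁'),…,O(E_s')} coincide. -/
import Mathlib


open Filter Topology

/-- The type of all integer partitions (of all natural numbers `n`). -/
def PartitionsAll : Type := Σ n : ℕ, Nat.Partition n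

/-- The empty partition of `0`. -/
def partZero : PartitionsAll := ⟨0, ⟨0, by simp, rfl⟩⟩

/-- The unique partition of `1`. -/
def partOne : PartitionsAll :=
  ⟨1, ⟨{1}, by intro i hi; rw [Multiset.mem_singleton] at hi; omega, rfl⟩⟩

instance : Zero PartitionsAll := ⟨partZero⟩

/-- The set of isomorphism classes of finite abelian groups, identified with the
finitely supported families of partitions indexed by the primes. -/
abbrev GG : Type := Nat.Primes →₀ PartitionsAll

/-- The finite abelian `p`-group `⊕ⱼ ℤ/p^{λ_j}ℤ` corresponding to a partition `λ`. -/
abbrev pGroup (p : ℕ) (lam : PartitionsAll) : Type :=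
  ∀ i : Fin lam.2.parts.toList.length, ZMod (p ^ lam.2.parts.toList.get i)

/-- The Cohen–Lenstra weight `w_p(λ) = 1/#Aut(G_{p,λ})`. -/
noncomputable def wCL (p : ℕ) (lam : PartitionsAll) : ℝ :=
  ((Nat.card (AddAut (pGroup p lam)) : ℝ))⁻¹

/-- `∏_{i=1}^∞ (1 - p^{-i})`. -/
noncomputable def clC (p : ℕ) : ℝ := ∏' i : ℕ, (1 - ((p : ℝ))⁻¹ ^ (i + 1))

/-- The local Cohen–Lenstra probability `P_p(S) = (∑_{λ∈S} w_p(λ)) ∏_{i≥1}(1-p^{-i})`. -/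
noncomputable def Pp (p : ℕ) (S : Set PartitionsAll) : ℝ :=
  (∑' lam : S, wCL p lam) * clC p

/-- The primes `≤ x`. -/
def primesUpTo (x : ℕ) : Finset ℕ := Nat.primesBelow (x + 1)

/-- The partial products `∏_{p ≤ x} P_p(S)`. -/
noncomputable def globPartial (S : Set PartitionsAll) (x : ℕ) : ℝ :=
  ∏ p ∈ primesUpTo x, Pp p S

/-- The global value `lim_{x→∞} ∏_{p ≤ x} P_p(S)` (the limit exists since all
factors lie in `[0,1]`). -/
noncomputable def glob (S : Set PartitionsAll) : ℝ :=
  limUnder atTop (globPartial S)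

/-- `O(S) = {G : G_p ∈ S for all primes p}`. -/
def Oset (S : Set PartitionsAll) : Set GG := {G : GG | ∀ p : Nat.Primes, G p ∈ S}

/-- `O(E₁, …, E_r) = O(E₁) ∪ … ∪ O(E_r)`. -/
def OOset {r : ℕ} (E : Fin r → Set PartitionsAll) : Set GG := ⋃ i, Oset (E i)

/-- Inclusion–exclusion value of `O(E₁, …, E_r)`. -/
noncomputable def PO {r : ℕ} (E : Fin r → Set PartitionsAll) : ℝ :=
  ∑ T ∈ Finset.univ.filter (fun T : Finset (Fin r) => T.Nonempty),
    (-1 : ℝ) ^ (T.card + 1) * glob (⋂ i ∈ T, E i)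

/-- The collection `𝔇` of sets `D(E₁,…,E_r;F₁,…,F_s)`. -/
def DD : Set (Set GG) :=
  {A | ∃ (r s : ℕ) (E : Fin r → Set PartitionsAll) (F : Fin s → Set PartitionsAll),
      OOset F ⊆ OOset E ∧ A = OOset E \ OOset F}

/-- The value `P(D)` of a set `D ∈ 𝔇` (well-defined: it depends only on the set `D`). -/
noncomputable def PDval (A : Set GG) : ℝ :=
  sSup {x : ℝ | ∃ (r s : ℕ) (E : Fin r → Set PartitionsAll) (F : Fin s → Set PartitionsAll),
      OOset F ⊆ OOset E ∧ A = OOset E \ OOset F ∧ x = PO E - PO F}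

/-- The outer measure `ν`. -/
noncomputable def nuCL (A : Set GG) : ℝ :=
  sInf {x : ℝ | ∃ C : ℕ → Set GG, (∀ i, C i ∈ DD) ∧ A ⊆ ⋃ i, C i ∧ x = ∑' i, PDval (C i)}

/-- The order of a finite abelian group. -/
def ordG (G : GG) : ℕ := G.prod fun p lam => (p : ℕ) ^ lam.1

/-- The exponent of a finite abelian group. -/
def expG (G : GG) : ℕ := G.prod fun p lam => (p : ℕ) ^ lam.2.parts.sup



open Classical in
lemma key_lemma_maxrep (s : ℕ) (S : Set PartitionsAll) (hS0 : partZero ∈ S)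
    (E' : Fin s → Set PartitionsAll)
    (h : Oset S ⊆ ⋃ j, Oset (E' j)) : ∃ j, Oset S ⊆ Oset (E' j) := by
  by_contra hc
  push_neg at hc
  have hc' : ∀ j, ∃ G, G ∈ Oset S ∧ G ∉ Oset (E' j) := fun j => Set.not_subset.mp (hc j)
  choose Gf hGf hGf' using hc'
  have hbad : ∀ j, ∃ p : Nat.Primes, (Gf j) p ∉ E' j := by
    intro j
    by_contra hb
    push_neg at hb
    exact hGf' j hb
  choose pf hpf using hbad
  set v : Fin s → PartitionsAll := fun j => (Gf j) (pf j) with hv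
  have hvS : ∀ j, v j ∈ S := fun j => hGf j (pf j)
  obtain ⟨q⟩ : Nonempty (Fin s ↪ Nat.Primes) :=
    ⟨(Fin.valEmbedding).trans (Infinite.natEmbedding Nat.Primes)⟩
  set f : Nat.Primes → PartitionsAll :=
    fun p => if h : ∃ j, q j = p then v h.choose else 0 with hf
  have hG : ∀ j, f (q j) = v j := by
    intro j
    have hex : ∃ j', q j' = q j := ⟨j, rfl⟩
    have : hex.choose = j := q.injective hex.choose_spec
    simp only [hf, dif_pos hex, this]
  set G : GG := Finsupp.onFinset (Finset.univ.image q)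
    f (by
      intro p hp
      simp only [Finset.mem_image, Finset.mem_univ, true_and]
      by_contra hq
      push_neg at hq
      have : ¬ ∃ j, q j = p := fun ⟨j, hj⟩ => hq j hj
      simp only [hf, dif_neg this] at hp
      exact hp rfl) with hGdef
  have hGS : G ∈ Oset S := by
    intro p
    show f p ∈ S
    by_cases hex : ∃ j, q j = p
    · simp only [hf, dif_pos hex]; exact hvS _
    · simp only [hf, dif_neg hex]; exact hS0
  obtain ⟨j, hGA⟩ := Set.mem_iUnion.mp (h hGS)
  exact hpf j (by have := hGA (q j); rwa [show G (q j) = v j from hG j] at this)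

/-- Uniqueness of maximal representations: if two families of uniform properties, each
containing the empty partition, have pairwise incomparable (in particular pairwise
distinct) sets `O(Eᵢ)`, and the unions agree, then the families of sets coincide. -/
theorem maximal_representation_unique (r s : ℕ)
    (E : Fin r → Set PartitionsAll) (E' : Fin s → Set PartitionsAll)
    (hE0 : ∀ i, partZero ∈ E i) (hE'0 : ∀ j, partZero ∈ E' j)
    (hmax : ∀ i j, i ≠ j → ¬ Oset (E i) ⊆ Oset (E j))
    (hmax' : ∀ i j, i ≠ j → ¬ Oset (E' i) ⊆ Oset (E' j))
    (hun : (⋃ i, Oset (E i)) = ⋃ j, Oset (E' j)) :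
    r = s ∧ Set.range (fun i => Oset (E i)) = Set.range (fun j => Oset (E' j)) := by
  have h1 : ∀ i, ∃ j, Oset (E i) ⊆ Oset (E' j) := fun i =>
    key_lemma_maxrep s (E i) (hE0 i) E' (hun ▸ Set.subset_iUnion (fun i => Oset (E i)) i)
  have h2 : ∀ j, ∃ i, Oset (E' j) ⊆ Oset (E i) := fun j =>
    key_lemma_maxrep r (E' j) (hE'0 j) E (hun ▸ Set.subset_iUnion (fun j => Oset (E' j)) j)
  choose f hf using h1
  choose g hg using h2
  have hgf : ∀ i, g (f i) = i := by
    intro i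
    by_contra hne
    exact hmax i (g (f i)) (fun h => hne h.symm) ((hf i).trans (hg (f i)))
  have hfg : ∀ j, f (g j) = j := by
    intro j
    by_contra hne
    exact hmax' j (f (g j)) (fun h => hne h.symm) ((hg j).trans (hf (g j)))
  have heq : ∀ i, Oset (E i) = Oset (E' (f i)) := fun i =>
    subset_antisymm (hf i) (by have := hg (f i); rwa [hgf i] at this)
  constructor
  · have := Fintype.card_congr (⟨f, g, hgf, hfg⟩ : Fin r ≃ Fin s)
    simpa using this
  · ext A
    constructor
    · rintro ⟨i, rfl⟩
      exact ⟨f i, (heq i).symm⟩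
    · rintro ⟨j, rfl⟩
      refine ⟨g j, ?_⟩
      have := heq (g j)
      rwa [hfg j] at this
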